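/- Let (W, R) be a countable rooted S4-frame that has a maximal cluster, i.e., there exists an R-maximal point w₀ (a point with w₀ R v implying v R w₀). Then there exist a topological space X, a surjective interior map ρ : 𝐋₂ → X, and an injective map h from the powerset of W to the powerset of X such that h preserves finite unions and complements and satisfies h(R⁻¹(A)) = closure(h(A)) for every A ⊆ W, where R⁻¹(A) = {w : ∃ v ∈ A, w R v}. -/

import Mathlib

open Set

/-- Finite and infinite `σ`-valued sequences, encoded as functions `ℕ → Option σ` whose
domain of definition is an initial segment of `ℕ`. -/
structure Lgen (σ : Type*) where
  toFun : ℕ → Option σ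
  init : ∀ n, toFun (n + 1) ≠ none → toFun n ≠ none

/-- The initial-segment (prefix) partial order on `Lgen σ`. -/
instance Lgen.instPartialOrder {σ : Type*} : PartialOrder (Lgen σ) where
  le f g := ∀ (n : ℕ) (s : σ), f.toFun n = some s → g.toFun n = some s
  le_refl f n s h := h
  le_trans f g h hfg hgh n s hs := hgh n s (hfg n s hs)
  le_antisymm f g hfg hgf := by
    obtain ⟨ff, hf⟩ := f
    obtain ⟨gf, hg⟩ := g
    have hfun : ff = gf := by
      funext n
      cases hfn : ff n with
      | some s =>
        have h2 : gf n = some s := hfg n s hfn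
        exact h2.symm
      | none =>
        cases hgn : gf n with
        | some s =>
          have h2 : ff n = some s := hgf n s hgn
          rw [hfn] at h2
          exact absurd h2 (by simp)
        | none => rfl
    subst hfun
    rfl

/-- The finite sequence given by a list, as an element of `Lgen σ`. -/
def Lgen.ofList {σ : Type*} (l : List σ) : Lgen σ where
  toFun n := l[n]?
  init n h := by
    simp only [ne_eq, List.getElem?_eq_none_iff, not_le] at h ⊢
    omega

/-- The infinite binary tree with limits `L₂`: finite and infinite binary sequences with the
initial-segment order. -/
abbrev L2 : Type := Lgen Bool

/-- The Scott topology of a preorder: opens are the upper sets `U` such that every nonempty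
directed set whose least upper bound lies in `U` meets `U`. -/
def scottTopology (α : Type*) [Preorder α] : TopologicalSpace α where
  IsOpen U := IsUpperSet U ∧ ∀ d : Set α, d.Nonempty → DirectedOn (· ≤ ·) d →
      ∀ x, IsLUB d x → x ∈ U → (d ∩ U).Nonempty
  isOpen_univ := ⟨isUpperSet_univ, fun d hd _ _ _ _ => hd.imp fun y hy => ⟨hy, mem_univ y⟩⟩
  isOpen_inter := by
    rintro U V ⟨hU1, hU2⟩ ⟨hV1, hV2⟩
    refine ⟨hU1.inter hV1, fun d hdne hdir x hlub hx => ?_⟩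
    obtain ⟨a, ha, haU⟩ := hU2 d hdne hdir x hlub hx.1
    obtain ⟨b, hb, hbV⟩ := hV2 d hdne hdir x hlub hx.2
    obtain ⟨c, hc, hac, hbc⟩ := hdir a ha b hb
    exact ⟨c, hc, hU1 hac haU, hV1 hbc hbV⟩
  isOpen_sUnion := by
    intro S hS
    refine ⟨fun a b hab ha => ?_, fun d hdne hdir x hlub hx => ?_⟩
    · obtain ⟨U, hU, haU⟩ := ha
      exact ⟨U, hU, (hS U hU).1 hab haU⟩
    · obtain ⟨U, hU, hxU⟩ := hx
      obtain ⟨a, ha, haU⟩ := (hS U hU).2 d hdne hdir x hlub hxU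
      exact ⟨a, ha, U, hU, haU⟩

/-- `𝐋₂`: the infinite binary tree with limits carries the Scott topology. -/
instance : TopologicalSpace L2 := scottTopology L2

namespace S19
open Filter

variable {W : Type*}

open Classical in
/-- One step of the labeling automaton: state is (current label, trailing-false count). -/
noncomputable def step (R : W → W → Prop) (E : ℕ → W) : W × ℕ → Bool → W × ℕ :=
  fun s b =>
    match b with
    | false => (s.1, s.2 + 1)
    | true => (if R s.1 (E s.2) then E s.2 else s.1, 0)

noncomputable def gos (R : W → W → Prop) (E : ℕ → W) (s : W × ℕ) (l : List Bool) : W × ℕ :=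
  l.foldl (step R E) s

lemma gos_append (R : W → W → Prop) (E : ℕ → W) (s : W × ℕ) (l t : List Bool) :
    gos R E s (l ++ t) = gos R E (gos R E s l) t := List.foldl_append

lemma step_R {R : W → W → Prop} {E : ℕ → W} (hrefl : ∀ w, R w w) (s : W × ℕ) (b : Bool) :
    R s.1 (step R E s b).1 := by
  cases b with
  | false => exact hrefl _
  | true =>
    by_cases h : R s.1 (E s.2)
    · simpa [step, h] using h
    · simpa [step, h] using hrefl s.1

lemma gos_R {R : W → W → Prop} {E : ℕ → W} (hrefl : ∀ w, R w w)
    (htrans : ∀ u v w, R u v → R v w → R u w) :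
    ∀ (l : List Bool) (s : W × ℕ), R s.1 (gos R E s l).1 := by
  intro l
  induction l with
  | nil => intro s; exact hrefl _
  | cons b l ih =>
    intro s
    exact htrans _ _ _ (step_R hrefl s b) (ih (step R E s b))

lemma gos_replicate (R : W → W → Prop) (E : ℕ → W) (w : W) :
    ∀ (m k : ℕ), gos R E (w, k) (List.replicate m false) = (w, k + m) := by
  intro m
  induction m with
  | zero => intro k; rfl
  | succ m ih =>
    intro k
    have h1 : List.replicate (m+1) false = false :: List.replicate m false := rfl
    rw [h1]
    show gos R E (step R E (w, k) false) (List.replicate m false) = _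
    have h2 : step R E (w, k) false = (w, k+1) := rfl
    rw [h2, ih]
    congr 1
    omega

lemma gos_reach {R : W → W → Prop} {E : ℕ → W}
    (hE : ∀ (k₀ : ℕ) (u : W), ∃ k, k₀ ≤ k ∧ E k = u)
    (s : W × ℕ) (u : W) (h : R s.1 u) :
    ∃ δ : List Bool, (gos R E s δ).1 = u := by
  obtain ⟨w, k₀⟩ := s
  obtain ⟨k, hk, hEk⟩ := hE k₀ u
  refine ⟨List.replicate (k - k₀) false ++ [true], ?_⟩
  rw [gos_append, gos_replicate]
  have hkk : k₀ + (k - k₀) = k := by omega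
  rw [hkk]
  show (step R E (w, k) true).1 = u
  have hRw : R w (E k) := by rw [hEk]; exact h
  simp only [step]
  rw [if_pos hRw]
  exact hEk

/-- The label of a finite binary sequence. -/
noncomputable def F (R : W → W → Prop) (E : ℕ → W) (r : W) (l : List Bool) : W :=
  (gos R E (r, 0) l).1

lemma F_append_R {R : W → W → Prop} {E : ℕ → W} {r : W} (hrefl : ∀ w, R w w)
    (htrans : ∀ u v w, R u v → R v w → R u w) (l t : List Bool) :
    R (F R E r l) (F R E r (l ++ t)) := by
  unfold F
  rw [gos_append]
  exact gos_R hrefl htrans t _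

lemma F_reach {R : W → W → Prop} {E : ℕ → W} {r : W}
    (hE : ∀ (k₀ : ℕ) (u : W), ∃ k, k₀ ≤ k ∧ E k = u)
    (l : List Bool) (u : W) (h : R (F R E r l) u) :
    ∃ δ, F R E r (l ++ δ) = u := by
  obtain ⟨δ, hδ⟩ := gos_reach hE (gos R E (r, 0) l) u h
  refine ⟨δ, ?_⟩
  unfold F
  rw [gos_append]
  exact hδ

/-! ### L2 infrastructure -/

def isInf (x : L2) : Prop := ∀ n, x.toFun n ≠ none

lemma lgen_ext {x y : L2} (h : ∀ n, x.toFun n = y.toFun n) : x = y := by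
  obtain ⟨f, hf⟩ := x; obtain ⟨g, hg⟩ := y
  have h2 : f = g := funext h
  subst h2
  rfl

lemma none_mono (x : L2) {m k : ℕ} (hmk : m ≤ k) (h : x.toFun m = none) : x.toFun k = none := by
  induction k, hmk using Nat.le_induction with
  | base => exact h
  | succ k hk ih =>
    by_contra hne
    exact (x.init k hne) ih

lemma ofList_le_append (l t : List Bool) : Lgen.ofList l ≤ Lgen.ofList (l ++ t) := by
  intro n s h
  have h' : l[n]? = some s := h
  have hn : n < l.length := (List.getElem?_eq_some_iff.mp h').1
  show (l ++ t)[n]? = some s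
  rw [List.getElem?_append_left hn]
  exact h'

lemma prefix_of_getElem? : ∀ {l l' : List Bool},
    (∀ (n : ℕ) (s : Bool), l[n]? = some s → l'[n]? = some s) → l <+: l' := by
  intro l
  induction l with
  | nil => intro l' _; exact List.nil_prefix
  | cons a l ih =>
    intro l' h
    have h0 : l'[0]? = some a := h 0 a (by simp)
    cases l' with
    | nil => simp at h0
    | cons b t =>
      have hba : b = a := by simpa using h0
      subst hba
      rw [List.cons_prefix_cons]
      refine ⟨rfl, ih ?_⟩
      intro n s hn
      have := h (n+1) s (by simpa using hn)
      simpa using this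

lemma exists_suffix_of_le {l l' : List Bool} (h : Lgen.ofList l ≤ Lgen.ofList l') :
    ∃ t, l' = l ++ t := by
  obtain ⟨t, ht⟩ := prefix_of_getElem? (fun n s hs => h n s hs)
  exact ⟨t, ht.symm⟩

lemma ofList_not_inf (l : List Bool) : ¬ isInf (Lgen.ofList l) := by
  intro h
  exact h l.length (List.getElem?_eq_none le_rfl)

lemma ofList_inj {l l' : List Bool} (h : Lgen.ofList l = Lgen.ofList l') : l = l' := by
  apply List.ext_getElem?
  intro n
  exact congrFun (congrArg Lgen.toFun h) n

/-- The length-`n` approximation of `x` as a list. -/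
def approx (x : L2) (n : ℕ) : List Bool := List.ofFn (fun i : Fin n => (x.toFun i).getD false)

lemma approx_length (x : L2) (n : ℕ) : (approx x n).length = n := List.length_ofFn

lemma approx_getElem? (x : L2) {m n : ℕ} (hmn : m < n) :
    (approx x n)[m]? = some ((x.toFun m).getD false) := by
  simp [approx, List.getElem?_ofFn, List.ofFnNthVal, hmn]

lemma approx_getElem?_inf {x : L2} (hx : isInf x) {m n : ℕ} (hmn : m < n) :
    (approx x n)[m]? = x.toFun m := by
  obtain ⟨b, hb⟩ := Option.ne_none_iff_exists'.mp (hx m)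
  rw [approx_getElem? x hmn, hb]
  rfl

lemma ofList_approx_le {x : L2} (hx : isInf x) (n : ℕ) : Lgen.ofList (approx x n) ≤ x := by
  intro m s h
  have h' : (approx x n)[m]? = some s := h
  have hm : m < n := by
    have := (List.getElem?_eq_some_iff.mp h').1
    rwa [approx_length] at this
  rw [← approx_getElem?_inf hx hm]
  exact h'

lemma approx_le_approx {x : L2} (hx : isInf x) {n m : ℕ} (hnm : n ≤ m) :
    Lgen.ofList (approx x n) ≤ Lgen.ofList (approx x m) := by
  intro k s h
  have h' : (approx x n)[k]? = some s := h
  have hk : k < n := by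
    have := (List.getElem?_eq_some_iff.mp h').1
    rwa [approx_length] at this
  show (approx x m)[k]? = some s
  rw [approx_getElem?_inf hx (lt_of_lt_of_le hk hnm), ← approx_getElem?_inf hx hk]
  exact h'

lemma approx_eq_of_le {x : L2} (hx : isInf x) {l : List Bool} (h : Lgen.ofList l ≤ x) :
    approx x l.length = l := by
  apply List.ext_getElem?
  intro n
  rcases Nat.lt_or_ge n l.length with h1 | h2
  · have hs : l[n]? = some l[n] := List.getElem?_eq_getElem h1
    rw [approx_getElem?_inf hx h1, hs]
    exact h n l[n] hs
  · rw [List.getElem?_eq_none (by rw [approx_length]; exact h2), List.getElem?_eq_none h2]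

lemma isLUB_approx {x : L2} (hx : isInf x) :
    IsLUB (Set.range fun n => Lgen.ofList (approx x n)) x := by
  constructor
  · rintro y ⟨n, rfl⟩
    exact ofList_approx_le hx n
  · intro z hz n s hs
    have h1 : Lgen.ofList (approx x (n+1)) ≤ z := hz ⟨n+1, rfl⟩
    apply h1 n s
    show (approx x (n+1))[n]? = some s
    rw [approx_getElem?_inf hx (Nat.lt_succ_self n)]
    exact hs

lemma finite_or_inf (y : L2) : (∃ l, y = Lgen.ofList l) ∨ isInf y := by
  by_cases h : ∀ n, y.toFun n ≠ none
  · exact Or.inr h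
  · push_neg at h
    left
    have hN := Nat.find_spec h
    refine ⟨approx y (Nat.find h), lgen_ext ?_⟩
    intro m
    show y.toFun m = (approx y (Nat.find h))[m]?
    rcases Nat.lt_or_ge m (Nat.find h) with h1 | h2
    · have hm : y.toFun m ≠ none := Nat.find_min h h1
      obtain ⟨b, hb⟩ := Option.ne_none_iff_exists'.mp hm
      rw [approx_getElem? y h1, hb]
      rfl
    · rw [List.getElem?_eq_none (by rw [approx_length]; exact h2)]
      exact none_mono y h2 hN

/-- Truncation of an element of `L2` at position `m`. -/
def trunc (x : L2) (m : ℕ) : L2 where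
  toFun k := if k < m then x.toFun k else none
  init k h := by
    by_cases h1 : k + 1 < m
    · have h2 : k < m := by omega
      simp only [if_pos h1] at h
      simp only [if_pos h2]
      exact x.init k h
    · simp only [if_neg h1] at h
      exact absurd rfl h

/-! ### Topology of L2 -/

lemma isOpen_def {U : Set L2} : IsOpen U ↔ (IsUpperSet U ∧ ∀ d : Set L2, d.Nonempty →
    DirectedOn (· ≤ ·) d → ∀ x, IsLUB d x → x ∈ U → (d ∩ U).Nonempty) := Iff.rfl

lemma isOpen_cone (l : List Bool) : IsOpen {y : L2 | Lgen.ofList l ≤ y} := by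
  rw [isOpen_def]
  constructor
  · intro a b hab ha
    exact le_trans ha hab
  · intro d hdne hdir x hlub hx
    by_cases hgood : ∀ m < l.length, ∃ w ∈ d, w.toFun m ≠ none
    · have key : ∀ k, k ≤ l.length → ∃ w ∈ d, ∀ m < k, w.toFun m ≠ none := by
        intro k
        induction k with
        | zero =>
          intro _
          obtain ⟨w, hw⟩ := hdne
          exact ⟨w, hw, fun m hm => absurd hm (Nat.not_lt_zero m)⟩
        | succ k ih =>
          intro hk
          obtain ⟨w, hwd, hw⟩ := ih (by omega)
          obtain ⟨w', hw'd, hw'⟩ := hgood k (by omega)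
          obtain ⟨u, hud, hwu, hw'u⟩ := hdir w hwd w' hw'd
          refine ⟨u, hud, ?_⟩
          intro m hm
          rcases Nat.lt_or_ge m k with h1 | h2
          · obtain ⟨b, hb⟩ := Option.ne_none_iff_exists'.mp (hw m h1)
            rw [hwu m b hb]
            simp
          · have hmk : m = k := by omega
            subst hmk
            obtain ⟨b, hb⟩ := Option.ne_none_iff_exists'.mp hw'
            rw [hw'u m b hb]
            simp
      obtain ⟨w, hwd, hw⟩ := key l.length le_rfl
      refine ⟨w, hwd, ?_⟩
      intro m s hms
      have h' : l[m]? = some s := hms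
      have hm : m < l.length := (List.getElem?_eq_some_iff.mp h').1
      obtain ⟨b, hb⟩ := Option.ne_none_iff_exists'.mp (hw m hm)
      have h1 : x.toFun m = some b := hlub.1 hwd m b hb
      have h2 : x.toFun m = some s := hx m s hms
      rw [hb, (h1.symm.trans h2)]
    · push_neg at hgood
      obtain ⟨m, hm, hall⟩ := hgood
      exfalso
      have hub : trunc x m ∈ upperBounds d := by
        intro w hw k s hk
        have hkm : k < m := by
          by_contra hkm
          have h3 : w.toFun k = none := none_mono w (by omega) (hall w hw)
          rw [h3] at hk
          exact absurd hk (by simp)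
        show (if k < m then x.toFun k else none) = some s
        rw [if_pos hkm]
        exact hlub.1 hw k s hk
      have hxt : x ≤ trunc x m := hlub.2 hub
      have hs : l[m]? = some l[m] := List.getElem?_eq_getElem hm
      have h1 : x.toFun m = some l[m] := hx m l[m] hs
      have h2 := hxt m l[m] h1
      simp [trunc] at h2

lemma mem_closure_ofList {l : List Bool} {S : Set L2} :
    Lgen.ofList l ∈ closure S ↔ ∃ y ∈ S, Lgen.ofList l ≤ y := by
  constructor
  · intro h
    obtain ⟨y, hy1, hy2⟩ := mem_closure_iff.mp h _ (isOpen_cone l)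
      (show Lgen.ofList l ∈ {y : L2 | Lgen.ofList l ≤ y} from le_refl (Lgen.ofList l))
    exact ⟨y, hy2, hy1⟩
  · rintro ⟨y, hyS, hly⟩
    rw [mem_closure_iff]
    intro U hU hlU
    exact ⟨y, (isOpen_def.mp hU).1 hly hlU, hyS⟩

lemma mem_closure_inf {x : L2} (hx : isInf x) {S : Set L2} :
    x ∈ closure S ↔ ∀ n, ∃ y ∈ S, Lgen.ofList (approx x n) ≤ y := by
  constructor
  · intro h n
    obtain ⟨y, hy1, hy2⟩ :=
      mem_closure_iff.mp h _ (isOpen_cone (approx x n))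
        (show x ∈ {y : L2 | Lgen.ofList (approx x n) ≤ y} from ofList_approx_le hx n)
    exact ⟨y, hy2, hy1⟩
  · intro h
    rw [mem_closure_iff]
    intro U hU hxU
    obtain ⟨hup, hsc⟩ := isOpen_def.mp hU
    have hdne : (Set.range fun n => Lgen.ofList (approx x n)).Nonempty := ⟨_, 0, rfl⟩
    have hdir : DirectedOn (· ≤ ·) (Set.range fun n => Lgen.ofList (approx x n)) := by
      rintro a ⟨n, rfl⟩ b ⟨m, rfl⟩
      rcases le_total n m with h1 | h1
      · exact ⟨_, ⟨m, rfl⟩, approx_le_approx hx h1, le_refl _⟩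
      · exact ⟨_, ⟨n, rfl⟩, le_refl _, approx_le_approx hx h1⟩
    obtain ⟨a, ⟨n, rfl⟩, haU⟩ := hsc _ hdne hdir x (isLUB_approx hx) hxU
    obtain ⟨y, hyS, hy⟩ := h n
    exact ⟨y, hup hy haU, hyS⟩

/-! ### The ultrafilters and the embedding -/

noncomputable def UF (R : W → W → Prop) (E : ℕ → W) (r : W) (x : L2) : Ultrafilter W :=
  haveI : (Filter.map (fun n => F R E r (approx x n)) Filter.atTop).NeBot := Filter.map_neBot
  Ultrafilter.of (Filter.map (fun n => F R E r (approx x n)) Filter.atTop)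

lemma mem_UF {R : W → W → Prop} {E : ℕ → W} {r : W} {x : L2} {S : Set W}
    (h : ∀ᶠ n in Filter.atTop, F R E r (approx x n) ∈ S) : S ∈ UF R E r x := by
  haveI : (Filter.map (fun n => F R E r (approx x n)) Filter.atTop).NeBot := Filter.map_neBot
  have h' : S ∈ Filter.map (fun n => F R E r (approx x n)) Filter.atTop := h
  unfold UF
  exact Ultrafilter.mem_coe.mp (Filter.le_def.mp (Ultrafilter.of_le _) S h')

/-- The Boolean embedding. -/
noncomputable def hset (R : W → W → Prop) (E : ℕ → W) (r : W) (A : Set W) : Set L2 :=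
  {y | (∃ l, y = Lgen.ofList l ∧ F R E r l ∈ A) ∨ (isInf y ∧ A ∈ UF R E r y)}

lemma mem_hset_ofList {R : W → W → Prop} {E : ℕ → W} {r : W} {A : Set W} {l : List Bool} :
    Lgen.ofList l ∈ hset R E r A ↔ F R E r l ∈ A := by
  simp only [hset, Set.mem_setOf_eq]
  constructor
  · rintro (⟨l', hl', hF⟩ | ⟨hinf, _⟩)
    · rw [ofList_inj hl']
      exact hF
    · exact absurd hinf (ofList_not_inf l)
  · intro h
    exact Or.inl ⟨l, rfl, h⟩

lemma mem_hset_inf {R : W → W → Prop} {E : ℕ → W} {r : W} {A : Set W} {x : L2}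
    (hx : isInf x) : x ∈ hset R E r A ↔ A ∈ UF R E r x := by
  simp only [hset, Set.mem_setOf_eq]
  constructor
  · rintro (⟨l, rfl, _⟩ | ⟨_, h⟩)
    · exact absurd hx (ofList_not_inf l)
    · exact h
  · intro h
    exact Or.inr ⟨hx, h⟩

end S19

open S19 in
theorem main_aux {W : Type*} (R : W → W → Prop)
    (hrefl : ∀ w, R w w) (htrans : ∀ u v w, R u v → R v w → R u w)
    (E : ℕ → W) (hE : ∀ (k₀ : ℕ) (u : W), ∃ k, k₀ ≤ k ∧ E k = u)
    (r : W) (hr : ∀ v, R r v) :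
    ∃ (X : Type) (_ : TopologicalSpace X) (ρ : L2 → X),
      Function.Surjective ρ ∧ Continuous ρ ∧ IsOpenMap ρ ∧
      ∃ h : Set W → Set X, Function.Injective h ∧
        (∀ A B : Set W, h (A ∪ B) = h A ∪ h B) ∧
        (∀ A : Set W, h Aᶜ = (h A)ᶜ) ∧
        (∀ A : Set W, h {w : W | ∃ v ∈ A, R w v} = closure (h A)) := by
  have hFmono : ∀ l t, R (F R E r l) (F R E r (l ++ t)) :=
    fun l t => F_append_R hrefl htrans l t
  have hFreach : ∀ l u, R (F R E r l) u → ∃ δ, F R E r (l ++ δ) = u :=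
    fun l u h => F_reach hE l u h
  have hFsurj : ∀ u, ∃ l, F R E r l = u := by
    intro u
    have h0 : F R E r [] = r := rfl
    obtain ⟨δ, hδ⟩ := hFreach [] u (by rw [h0]; exact hr u)
    exact ⟨[] ++ δ, hδ⟩
  have hM1 : ∀ (x : L2), isInf x → ∀ n, {u | R (F R E r (approx x n)) u} ∈ UF R E r x := by
    intro x hx n
    apply mem_UF
    filter_upwards [Filter.eventually_ge_atTop n] with m hm
    obtain ⟨t, ht⟩ := exists_suffix_of_le (approx_le_approx hx hm)
    rw [ht]
    exact hFmono _ t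
  refine ⟨L2, inferInstance, id, Function.surjective_id, continuous_id, IsOpenMap.id,
    hset R E r, ?_, ?_, ?_, ?_⟩
  · -- injective
    intro A B hAB
    ext u
    obtain ⟨l, rfl⟩ := hFsurj u
    constructor <;> intro h
    · have h1 : Lgen.ofList l ∈ hset R E r A := mem_hset_ofList.mpr h
      rw [hAB] at h1
      exact mem_hset_ofList.mp h1
    · have h1 : Lgen.ofList l ∈ hset R E r B := mem_hset_ofList.mpr h
      rw [← hAB] at h1
      exact mem_hset_ofList.mp h1
  · -- unions
    intro A B
    ext y
    rcases finite_or_inf y with ⟨l, rfl⟩ | hy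
    · simp [Set.mem_union, mem_hset_ofList]
    · simp only [Set.mem_union, mem_hset_inf hy]
      exact Ultrafilter.union_mem_iff
  · -- complements
    intro A
    ext y
    rcases finite_or_inf y with ⟨l, rfl⟩ | hy
    · simp [Set.mem_compl_iff, mem_hset_ofList]
    · simp only [Set.mem_compl_iff, mem_hset_inf hy]
      exact Ultrafilter.compl_mem_iff_notMem
  · -- closure
    intro A
    ext y
    rcases finite_or_inf y with ⟨l, rfl⟩ | hy
    · rw [mem_hset_ofList, mem_closure_ofList]
      constructor
      · rintro ⟨v, hvA, hRv⟩
        obtain ⟨δ, hδ⟩ := hFreach l v hRv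
        exact ⟨Lgen.ofList (l ++ δ), mem_hset_ofList.mpr (by rw [hδ]; exact hvA),
          ofList_le_append l δ⟩
      · rintro ⟨y', hy'A, hly'⟩
        rcases finite_or_inf y' with ⟨l', rfl⟩ | hy'
        · obtain ⟨t, rfl⟩ := exists_suffix_of_le hly'
          exact ⟨F R E r (l ++ t), mem_hset_ofList.mp hy'A, hFmono l t⟩
        · have hAU : A ∈ UF R E r y' := (mem_hset_inf hy').mp hy'A
          have hl : approx y' l.length = l := approx_eq_of_le hy' hly'
          have hup : {u | R (F R E r l) u} ∈ UF R E r y' := by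
            have h2 := hM1 y' hy' l.length
            rwa [hl] at h2
          obtain ⟨v, hv1, hv2⟩ := Ultrafilter.nonempty_of_mem (Filter.inter_mem hAU hup)
          exact ⟨v, hv1, hv2⟩
    · rw [mem_hset_inf hy, mem_closure_inf hy]
      constructor
      · intro h n
        have hup := hM1 y hy n
        obtain ⟨u, hu1, hu2⟩ := Ultrafilter.nonempty_of_mem (Filter.inter_mem h hup)
        obtain ⟨a, haA, hua⟩ := hu1
        have hra : R (F R E r (approx y n)) a := htrans _ _ _ hu2 hua
        obtain ⟨δ, hδ⟩ := hFreach _ a hra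
        exact ⟨Lgen.ofList (approx y n ++ δ), mem_hset_ofList.mpr (by rw [hδ]; exact haA),
          ofList_le_append _ δ⟩
      · intro h
        apply mem_UF
        apply Filter.Eventually.of_forall
        intro n
        obtain ⟨y', hy'A, hy'le⟩ := h n
        rcases finite_or_inf y' with ⟨l', rfl⟩ | hy'
        · obtain ⟨t, rfl⟩ := exists_suffix_of_le hy'le
          exact ⟨F R E r (approx y n ++ t), mem_hset_ofList.mp hy'A, hFmono _ t⟩
        · have hAU : A ∈ UF R E r y' := (mem_hset_inf hy').mp hy'A
          have heq : approx y' n = approx y n := by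
            have h2 := approx_eq_of_le hy' hy'le
            rwa [approx_length] at h2
          have hup : {u | R (F R E r (approx y n)) u} ∈ UF R E r y' := by
            have h2 := hM1 y' hy' n
            rwa [heq] at h2
          obtain ⟨v, hv1, hv2⟩ := Ultrafilter.nonempty_of_mem (Filter.inter_mem hAU hup)
          exact ⟨v, hv1, hv2⟩

/-- Let `(W, R)` be a countable rooted S4-frame having an `R`-maximal point.
Then there are a topological space `X`, a surjective interior map `ρ : 𝐋₂ → X`, and an
injective map `h` from the powerset of `W` to the powerset of `X` preserving finite unions and
complements and satisfying `h (R⁻¹ A) = closure (h A)` for every `A ⊆ W`. -/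
theorem statement19 {W : Type*} [Countable W] (R : W → W → Prop)
    (hrefl : ∀ w, R w w) (htrans : ∀ u v w, R u v → R v w → R u w)
    (hroot : ∃ w, ∀ v, R w v)
    (hmax : ∃ w₀ : W, ∀ v, R w₀ v → R v w₀) :
    ∃ (X : Type) (_ : TopologicalSpace X) (ρ : L2 → X),
      Function.Surjective ρ ∧ Continuous ρ ∧ IsOpenMap ρ ∧
      ∃ h : Set W → Set X, Function.Injective h ∧
        (∀ A B : Set W, h (A ∪ B) = h A ∪ h B) ∧
        (∀ A : Set W, h Aᶜ = (h A)ᶜ) ∧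
        (∀ A : Set W, h {w : W | ∃ v ∈ A, R w v} = closure (h A)) := by

  classical
  obtain ⟨r, hr⟩ := hroot
  have hne : Nonempty W := ⟨r⟩
  obtain ⟨e, he⟩ := exists_surjective_nat W
  refine main_aux R hrefl htrans (fun n => e (Nat.unpair n).1) ?_ r hr
  intro k₀ u
  obtain ⟨i, hi⟩ := he u
  refine ⟨Nat.pair i k₀, Nat.right_le_pair i k₀, ?_⟩
  show e (Nat.unpair (Nat.pair i k₀)).1 = u
  rw [Nat.unpair_pair]
  exact hi
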